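/- arXiv:2304.09846 — 2 statements merged into one kernel-verified Lean document; each statement's English description precedes it below -/
import Mathlib

section
/- Let D be a projector, Π₀ and Π₁ be mutually orthogonal projectors on a finite-dimensional complex Hilbert space, and let |ψ⟩ be a unit vector in the image of Π₀ + Π₁. Then ‖Π₁ D Π₀ |ψ⟩‖² + ‖Π₀ D Π₁ |ψ⟩‖² ≥ (1/2)·(‖D|ψ⟩‖² − (‖D Π₀ |ψ⟩‖² + ‖D Π₁ |ψ⟩‖²))². -/
/-- Distinguishing implies Mapping: `D`, `P0`, `P1` projectors (Hermitian idempotents),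
`P0`, `P1` mutually orthogonal, `ψ` a unit vector in the image of `P0 + P1`. -/
theorem stmt_0 {H : Type*} [NormedAddCommGroup H] [InnerProductSpace ℂ H]
    [FiniteDimensional ℂ H]
    (D P0 P1 : H →ₗ[ℂ] H)
    (hD_adj : LinearMap.adjoint D = D) (hD_idem : D ∘ₗ D = D)
    (hP0_adj : LinearMap.adjoint P0 = P0) (hP0_idem : P0 ∘ₗ P0 = P0)
    (hP1_adj : LinearMap.adjoint P1 = P1) (hP1_idem : P1 ∘ₗ P1 = P1)
    (horth : P0 ∘ₗ P1 = 0)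
    (ψ : H) (hψ : ‖ψ‖ = 1) (hmem : (P0 + P1) ψ = ψ) :
    ‖P1 (D (P0 ψ))‖ ^ 2 + ‖P0 (D (P1 ψ))‖ ^ 2 ≥
      (1 / 2) * (‖D ψ‖ ^ 2 - (‖D (P0 ψ)‖ ^ 2 + ‖D (P1 ψ)‖ ^ 2)) ^ 2 := by
  have hswap : ∀ (T : H →ₗ[ℂ] H), LinearMap.adjoint T = T →
      ∀ x y : H, (inner ℂ (T x) y : ℂ) = inner ℂ x (T y) := by
    intro T hT x y
    conv_lhs => rw [← hT]
    exact LinearMap.adjoint_inner_left T y x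
  set a := P0 ψ with ha
  set b := P1 ψ with hb
  have hP0a : P0 a = a := by
    rw [ha, ← LinearMap.comp_apply, hP0_idem]
  have hP1b : P1 b = b := by
    rw [hb, ← LinearMap.comp_apply, hP1_idem]
  have hab : (inner ℂ a b : ℂ) = 0 := by
    have : (inner ℂ a b : ℂ) = inner ℂ ψ ((P0 ∘ₗ P1) ψ) := by
      rw [ha, hb, hswap P0 hP0_adj]; rfl
    rw [this, horth]; simp
  have habψ : a + b = ψ := by
    rw [ha, hb, ← LinearMap.add_apply, hmem]
  have hnorm : ‖a‖ ^ 2 + ‖b‖ ^ 2 = 1 := by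
    have h1 : ‖a + b‖ ^ 2 = ‖a‖ ^ 2 + 2 * (RCLike.re (inner ℂ a b : ℂ)) + ‖b‖ ^ 2 :=
      norm_add_sq (𝕜 := ℂ) a b
    rw [habψ, hψ, hab] at h1
    simp at h1
    linarith
  have hDψ : D ψ = D a + D b := by rw [← habψ, map_add]
  set z : ℂ := inner ℂ a (D b) with hz
  have hDD : ∀ x : H, D (D x) = D x := by
    intro x; rw [← LinearMap.comp_apply, hD_idem]
  have hDaDb : (inner ℂ (D a) (D b) : ℂ) = z := by
    rw [hswap D hD_adj, hDD]
  have hgap : ‖D ψ‖ ^ 2 - (‖D a‖ ^ 2 + ‖D b‖ ^ 2) = 2 * (RCLike.re z) := by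
    have h1 : ‖D a + D b‖ ^ 2
        = ‖D a‖ ^ 2 + 2 * (RCLike.re (inner ℂ (D a) (D b) : ℂ)) + ‖D b‖ ^ 2 :=
      norm_add_sq (𝕜 := ℂ) (D a) (D b)
    rw [hDψ, h1, hDaDb]; ring
  have hz1 : ‖z‖ ≤ ‖a‖ * ‖P0 (D b)‖ := by
    have : z = inner ℂ a (P0 (D b)) := by
      rw [hz]
      conv_lhs => rw [← hP0a, hswap P0 hP0_adj]
    rw [this]
    exact norm_inner_le_norm a (P0 (D b))
  have hz2 : ‖z‖ ≤ ‖P1 (D a)‖ * ‖b‖ := by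
    have : z = inner ℂ (P1 (D a)) b := by
      rw [hz, ← hswap D hD_adj]
      conv_lhs => rw [← hP1b, ← hswap P1 hP1_adj]
    rw [this]
    exact norm_inner_le_norm (P1 (D a)) b
  have hre : |RCLike.re z| ≤ ‖z‖ := RCLike.abs_re_le_norm z
  have hzn : (0:ℝ) ≤ ‖z‖ := norm_nonneg z
  have hna : (0:ℝ) ≤ ‖a‖ := norm_nonneg a
  have hnb : (0:ℝ) ≤ ‖b‖ := norm_nonneg b
  have hu : (0:ℝ) ≤ ‖P1 (D a)‖ := norm_nonneg _
  have hv : (0:ℝ) ≤ ‖P0 (D b)‖ := norm_nonneg _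
  rw [hgap]
  have habs : (RCLike.re z) ^ 2 ≤ ‖z‖ ^ 2 := by
    have h := pow_le_pow_left₀ (abs_nonneg (RCLike.re z)) hre 2
    rwa [sq_abs] at h
  nlinarith [mul_le_mul hz1 hz2 hzn (by positivity : (0:ℝ) ≤ ‖a‖ * ‖P0 (D b)‖),
    sq_nonneg (‖a‖ - ‖b‖), sq_nonneg (‖P1 (D a)‖ - ‖P0 (D b)‖),
    sq_nonneg (‖a‖ * ‖P0 (D b)‖ - ‖b‖ * ‖P1 (D a)‖), sq_nonneg ‖z‖]
end

section
/- Let ρ be a density matrix and Π a projector on a finite-dimensional complex Hilbert space with Tr(Πρ) ≥ 1 − δ for some δ ∈ [0,1]. Define ρ' = ΠρΠ / Tr(Πρ). Then the trace distance TD(ρ, ρ') ≤ 2√δ. -/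
open Matrix ComplexOrder

section helpers
variable {m : Type*} [Fintype m] [DecidableEq m]

variable {m : Type*} [Fintype m] [DecidableEq m]

noncomputable def psdSqrt {A : Matrix m m ℂ} (hA : A.IsHermitian) : Matrix m m ℂ :=
  (hA.eigenvectorUnitary : Matrix m m ℂ) *
    diagonal (((↑) : ℝ → ℂ) ∘ (Real.sqrt ·) ∘ hA.eigenvalues) *
    (star (hA.eigenvectorUnitary : Matrix m m ℂ))

lemma psdSqrt_psd {A : Matrix m m ℂ} (hA : A.IsHermitian) : (psdSqrt hA).PosSemidef := by
  have h1 : PosSemidef (diagonal (((↑) : ℝ → ℂ) ∘ (Real.sqrt ·) ∘ hA.eigenvalues)) := by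
    rw [posSemidef_diagonal_iff]
    intro i
    exact Complex.zero_le_real.mpr (Real.sqrt_nonneg _)
  have := h1.mul_mul_conjTranspose_same (hA.eigenvectorUnitary : Matrix m m ℂ)
  rwa [← Matrix.star_eq_conjTranspose] at this

lemma psdSqrt_mul_self {A : Matrix m m ℂ} (hA : A.IsHermitian) (hnn : ∀ i, 0 ≤ hA.eigenvalues i) :
    psdSqrt hA * psdSqrt hA = A := by
  have hU := (Matrix.mem_unitaryGroup_iff').mp (hA.eigenvectorUnitary).2
  have hspec := hA.spectral_theorem
  rw [Unitary.conjStarAlgAut_apply] at hspec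
  unfold psdSqrt
  set U : Matrix m m ℂ := (hA.eigenvectorUnitary : Matrix m m ℂ)
  rw [show ∀ D E : Matrix m m ℂ, U * D * star U * (U * E * star U) = U * (D * (star U * U) * E) * star U
    from fun D E => by simp only [mul_assoc], hU, mul_one, diagonal_mul_diagonal]
  conv_rhs => rw [hspec]
  congr 3
  funext i
  simp only [Function.comp_apply]
  rw [← Complex.ofReal_mul, Real.mul_self_sqrt (hnn i)]
  rfl

open scoped MatrixOrder in
lemma psd_sqrt_unique {A B C : Matrix m m ℂ} (hB : B.PosSemidef) (hC : C.PosSemidef)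
    (hBA : B * B = A) (hCA : C * C = A) : B = C :=
  (CFC.sqrt_unique hBA (Matrix.nonneg_iff_posSemidef.mpr hB)).symm.trans
    (CFC.sqrt_unique hCA (Matrix.nonneg_iff_posSemidef.mpr hC))

lemma psd_trace_nonneg {S : Matrix m m ℂ} (hS : S.PosSemidef) : 0 ≤ S.trace := by
  have h : ∀ i, 0 ≤ S i i := fun i => by
    exact hS.diag_nonneg
  exact Finset.sum_nonneg fun i _ => h i

lemma psd_mul_trace_nonneg {S T : Matrix m m ℂ} (hS : S.PosSemidef) (hT : T.PosSemidef) :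
    0 ≤ (S * T).trace := by
  have h1 : S * T = psdSqrt hS.1 * (psdSqrt hS.1 * T) := by
    rw [← mul_assoc, psdSqrt_mul_self hS.1 hS.eigenvalues_nonneg]
  rw [h1, trace_mul_comm, mul_assoc]
  have h2 : psdSqrt hS.1 * T * psdSqrt hS.1 = psdSqrt hS.1 * T * (psdSqrt hS.1)ᴴ := by
    rw [(psdSqrt_psd hS.1).1]
  have := hT.mul_mul_conjTranspose_same (psdSqrt hS.1)
  rw [← mul_assoc, h2]
  exact psd_trace_nonneg this

variable {m : Type*} [Fintype m] [DecidableEq m]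

section conj
variable (u : Matrix m m ℂ)

lemma conj_mul_conj (hu : uᴴ * u = 1) (d e : m → ℂ) :
    (u * diagonal d * uᴴ) * (u * diagonal e * uᴴ) = u * diagonal (d * e) * uᴴ := by
  have : diagonal d * (uᴴ * u) * diagonal e = diagonal (d * e) := by
    rw [hu, mul_one, diagonal_mul_diagonal]; rfl
  calc (u * diagonal d * uᴴ) * (u * diagonal e * uᴴ)
      = u * (diagonal d * (uᴴ * u) * diagonal e) * uᴴ := by
        simp only [mul_assoc]
    _ = u * diagonal (d * e) * uᴴ := by rw [this]

lemma trace_conj (hu : uᴴ * u = 1) (d : m → ℂ) :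
    (u * diagonal d * uᴴ).trace = ∑ i, d i := by
  rw [trace_mul_cycle, hu, one_mul, trace_diagonal]

lemma conj_herm (d : m → ℝ) :
    (u * diagonal (fun i => (d i : ℂ)) * uᴴ).IsHermitian := by
  unfold Matrix.IsHermitian
  rw [conjTranspose_mul, conjTranspose_mul, conjTranspose_conjTranspose,
    diagonal_conjTranspose, mul_assoc]
  congr 1
  ext i j
  simp [Matrix.diagonal, Pi.star_def]

lemma conj_psd (d : m → ℝ) (hd : ∀ i, 0 ≤ d i) :
    PosSemidef (u * diagonal (fun i => (d i : ℂ)) * uᴴ) := by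
  have h1 : PosSemidef (diagonal (fun i => (d i : ℂ))) := by
    rw [posSemidef_diagonal_iff]
    intro i
    exact Complex.zero_le_real.mpr (hd i)
  simpa [Matrix.star_eq_conjTranspose] using h1.mul_mul_conjTranspose_same u

end conj

variable {m : Type*} [Fintype m] [DecidableEq m]

lemma trace_conjTranspose_mul_re (Y : Matrix m m ℂ) :
    (Yᴴ * Y).trace.re = ∑ i : m, ∑ j : m, ‖Y j i‖ ^ 2 := by
  simp only [Matrix.trace, Matrix.diag, Matrix.mul_apply, Matrix.conjTranspose_apply]
  rw [Complex.re_sum]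
  congr 1; ext i
  rw [Complex.re_sum]
  congr 1; ext j
  have : star (Y j i) * Y j i = ((‖Y j i‖ ^ 2 : ℝ) : ℂ) := by
    rw [Complex.star_def, ← Complex.normSq_eq_conj_mul_self, Complex.sq_norm]
  rw [this, Complex.ofReal_re]

lemma abs_trace_conjTranspose_mul_le (Y Z : Matrix m m ℂ) :
    ‖(Yᴴ * Z).trace‖ ≤
      Real.sqrt ((Yᴴ * Y).trace.re) * Real.sqrt ((Zᴴ * Z).trace.re) := by
  have h1 : ‖(Yᴴ * Z).trace‖ ≤
      ∑ i : m, ∑ j : m, ‖Y j i‖ * ‖Z j i‖ := by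
    simp only [Matrix.trace, Matrix.diag, Matrix.mul_apply, Matrix.conjTranspose_apply]
    calc ‖∑ i : m, ∑ j : m, star (Y j i) * Z j i‖
        ≤ ∑ i : m, ‖∑ j : m, star (Y j i) * Z j i‖ := by
          exact norm_sum_le _ _
      _ ≤ ∑ i : m, ∑ j : m, ‖Y j i‖ * ‖Z j i‖ := by
          refine Finset.sum_le_sum fun i _ => (norm_sum_le _ _).trans ?_
          refine Finset.sum_le_sum fun j _ => le_of_eq ?_
          rw [norm_mul, Complex.star_def, Complex.norm_conj]
  refine h1.trans ?_
  rw [trace_conjTranspose_mul_re, trace_conjTranspose_mul_re,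
    ← Finset.sum_product', ← Finset.sum_product', ← Finset.sum_product']
  exact Real.sum_mul_le_sqrt_mul_sqrt _ _ _
end helpers

/-- Trace distance of two matrices: `(1/2) Tr √((ρ−σ)ᴴ(ρ−σ))`. -/
noncomputable def traceDist {m : Type*} [Fintype m] [DecidableEq m]
    (ρ σ : Matrix m m ℂ) : ℝ :=
  (((Matrix.posSemidef_conjTranspose_mul_self (ρ - σ)).1.eigenvectorUnitary : Matrix m m ℂ) *
      diagonal (((↑) : ℝ → ℂ) ∘ (Real.sqrt ·) ∘ (Matrix.posSemidef_conjTranspose_mul_self (ρ - σ)).1.eigenvalues) *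
      (star ((Matrix.posSemidef_conjTranspose_mul_self (ρ - σ)).1.eigenvectorUnitary : Matrix m m ℂ))).trace.re / 2

/-- Gentle measurement (Winter): if `Tr(Pρ) ≥ 1 − δ` then the post-measurement state
`ρ' = PρP / Tr(Pρ)` satisfies `TD(ρ, ρ') ≤ 2√δ`. -/
theorem stmt_1 {m : Type*} [Fintype m] [DecidableEq m]
    (ρ P : Matrix m m ℂ) (δ : ℝ)
    (hδ0 : 0 ≤ δ) (hδ1 : δ ≤ 1)
    (hρ : ρ.PosSemidef) (hρtr : ρ.trace = 1)
    (hP_herm : Pᴴ = P) (hP_idem : P * P = P)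
    (h : 1 - δ ≤ (P * ρ).trace.re) :
    traceDist ρ (((P * ρ).trace)⁻¹ • (P * ρ * P)) ≤ 2 * Real.sqrt δ := by
  set p : ℂ := (P * ρ).trace with hp
  set Q : Matrix m m ℂ := 1 - P with hQdef
  have hQ_herm : Qᴴ = Q := by
    simp [hQdef, conjTranspose_sub, hP_herm]
  have hQ_idem : Q * Q = Q := by
    simp only [hQdef, mul_sub, sub_mul, one_mul, mul_one, hP_idem]
    abel
  have hPsd_PρP : (P * ρ * P).PosSemidef := by
    have := hρ.mul_mul_conjTranspose_same P
    rwa [hP_herm] at this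
  have hPsd_QρQ : (Q * ρ * Q).PosSemidef := by
    have := hρ.mul_mul_conjTranspose_same Q
    rwa [hQ_herm] at this
  have hp_eq : p = (P * ρ * P).trace := by
    rw [hp]
    conv_rhs => rw [trace_mul_cycle, hP_idem]
  have hp_nonneg : 0 ≤ p := hp_eq ▸ psd_trace_nonneg hPsd_PρP
  have hqtr : (Q * ρ * Q).trace = 1 - p := by
    rw [trace_mul_cycle, hQ_idem, hQdef, sub_mul, one_mul, trace_sub, hρtr, ← hp]
  have hq_nonneg : 0 ≤ 1 - p := hqtr ▸ psd_trace_nonneg hPsd_QρQ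
  set pr : ℝ := p.re with hprdef
  have hpim : p.im = 0 := ((Complex.le_def.mp hp_nonneg).2).symm
  have hpr0 : 0 ≤ pr := (Complex.le_def.mp hp_nonneg).1
  have hpr1 : pr ≤ 1 := by
    have := (Complex.le_def.mp hq_nonneg).1
    simpa [pr] using this
  have hpc : p = (pr : ℂ) := Complex.ext rfl (by simp [hpim])
  have hδp : 1 - pr ≤ δ := by simp only [hprdef, hp]; linarith
  -- the difference and its spectral decomposition
  set σ : Matrix m m ℂ := p⁻¹ • (P * ρ * P) with hσdef
  set Δ : Matrix m m ℂ := ρ - σ with hΔdef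
  have hσ_herm : σᴴ = σ := by
    rw [hσdef, conjTranspose_smul, hPsd_PρP.1]
    congr 1
    rw [hpc, ← Complex.ofReal_inv]
    simp
  have hΔ_herm : Δ.IsHermitian := by
    rw [hΔdef]
    exact hρ.1.sub hσ_herm
  set u : Matrix m m ℂ := (hΔ_herm.eigenvectorUnitary : Matrix m m ℂ) with hudef
  set lam : m → ℝ := hΔ_herm.eigenvalues with hlamdef
  have hu1 : u * uᴴ = 1 := by
    have := (Matrix.mem_unitaryGroup_iff).mp (hΔ_herm.eigenvectorUnitary).2
    rwa [Matrix.star_eq_conjTranspose] at this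
  have hu2 : uᴴ * u = 1 := by
    have := (Matrix.mem_unitaryGroup_iff').mp (hΔ_herm.eigenvectorUnitary).2
    rwa [Matrix.star_eq_conjTranspose] at this
  have hspec : Δ = u * diagonal (fun i => (lam i : ℂ)) * uᴴ := by
    have := hΔ_herm.spectral_theorem
    rwa [Unitary.conjStarAlgAut_apply, Matrix.star_eq_conjTranspose] at this
  set sgn : m → ℝ := fun i => if lam i < 0 then -1 else 1 with hsgndef
  have hsgn_mul : ∀ i, sgn i * lam i = |lam i| := by
    intro i; by_cases hi : lam i < 0
    · simp [hsgndef, hi, abs_of_neg hi]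
    · simp [hsgndef, hi, abs_of_nonneg (not_lt.mp hi)]
  have hsgn_sq : ∀ i, sgn i * sgn i = 1 := by
    intro i; by_cases hi : lam i < 0 <;> simp [hsgndef, hi]
  have hsgn_le : ∀ i, |sgn i| ≤ 1 := by
    intro i; by_cases hi : lam i < 0 <;> simp [hsgndef, hi]
  set M : Matrix m m ℂ := u * diagonal (fun i => (sgn i : ℂ)) * uᴴ with hMdef
  have hM_herm : Mᴴ = M := conj_herm u sgn
  have hone : (1 : Matrix m m ℂ) = u * diagonal (fun _ => (1:ℂ)) * uᴴ := by
    rw [show (diagonal (fun _ : m => (1:ℂ))) = 1 from Matrix.diagonal_one, mul_one, hu1]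
  have hMM : M * M = 1 := by
    rw [hMdef, conj_mul_conj u hu2]
    have h1 : ((fun i => (sgn i:ℂ)) * fun i => (sgn i:ℂ)) = fun _ => (1:ℂ) := by
      funext i
      simp only [Pi.mul_apply]
      rw [← Complex.ofReal_mul, hsgn_sq i, Complex.ofReal_one]
    rw [h1, ← hone]
  -- sqrt identification and trace distance value
  have hS_psd : PosSemidef (u * diagonal (fun i => ((|lam i| : ℝ) : ℂ)) * uᴴ) :=
    conj_psd u _ (fun i => abs_nonneg _)
  have hS_sq : (u * diagonal (fun i => ((|lam i| : ℝ) : ℂ)) * uᴴ) ^ 2 = (ρ - σ)ᴴ * (ρ - σ) := by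
    rw [pow_two, conj_mul_conj u hu2, ← hΔdef, hΔ_herm.eq]
    conv_rhs => rw [hspec, conj_mul_conj u hu2]
    have hfun : ((fun i => ((|lam i| : ℝ) : ℂ)) * fun i => ((|lam i| : ℝ) : ℂ))
        = ((fun i => ((lam i : ℝ) : ℂ)) * fun i => ((lam i : ℝ) : ℂ)) := by
      funext i
      simp only [Pi.mul_apply]
      rw [← Complex.ofReal_mul, ← Complex.ofReal_mul, abs_mul_abs_self]
    rw [hfun]
  have hsqrt_eq : psdSqrt (Matrix.posSemidef_conjTranspose_mul_self (ρ - σ)).1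
      = u * diagonal (fun i => ((|lam i| : ℝ) : ℂ)) * uᴴ :=
    psd_sqrt_unique (psdSqrt_psd _)  hS_psd
      (psdSqrt_mul_self _ (Matrix.posSemidef_conjTranspose_mul_self (ρ - σ)).eigenvalues_nonneg)
      ((pow_two _).symm.trans hS_sq)
  have hTD : traceDist ρ σ = (∑ i, |lam i|) / 2 := by
    show (psdSqrt (Matrix.posSemidef_conjTranspose_mul_self (ρ - σ)).1).trace.re / 2 = _
    rw [hsqrt_eq, trace_conj u hu2, ← Complex.ofReal_sum, Complex.ofReal_re]
  -- trace of M * Δ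
  have htrMΔ : (M * Δ).trace = ((∑ i, |lam i| : ℝ) : ℂ) := by
    conv_lhs => rw [hspec, hMdef]
    rw [conj_mul_conj u hu2, trace_conj u hu2, Complex.ofReal_sum]
    refine Finset.sum_congr rfl fun i _ => ?_
    simp only [Pi.mul_apply]
    rw [← Complex.ofReal_mul, hsgn_mul i]
  -- PSD of 1 ± M
  have h1subM : PosSemidef (1 - M) := by
    have he : (1 : Matrix m m ℂ) - M = u * diagonal (fun i => ((1 - sgn i : ℝ) : ℂ)) * uᴴ := by
      rw [hone, hMdef, ← sub_mul, ← mul_sub, Matrix.diagonal_sub]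
      congr 2
      funext i
      push_cast
      ring
    rw [he]
    exact conj_psd u _ (fun i => by have := hsgn_le i; rw [abs_le] at this; linarith)
  have h1addM : PosSemidef (1 + M) := by
    have he : (1 : Matrix m m ℂ) + M = u * diagonal (fun i => ((1 + sgn i : ℝ) : ℂ)) * uᴴ := by
      rw [hone, hMdef, ← add_mul, ← mul_add, Matrix.diagonal_add]
      congr 2
      funext i
      push_cast
      ring
    rw [he]
    exact conj_psd u _ (fun i => by have := hsgn_le i; rw [abs_le] at this; linarith)
  -- decomposition of Δ
  have hρsplit : ρ = Q*ρ*Q + Q*ρ*P + P*ρ*Q + P*ρ*P := by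
    rw [hQdef]
    noncomm_ring
  have hdec : Δ = Q*ρ*Q + Q*ρ*P + P*ρ*Q + (1 - p⁻¹) • (P*ρ*P) := by
    rw [hΔdef, hσdef]
    nth_rewrite 1 [hρsplit]
    rw [sub_smul, one_smul]
    module
  have hsplit : (M * Δ).trace = (M*(Q*ρ*Q)).trace + (M*(Q*ρ*P)).trace + (M*(P*ρ*Q)).trace
      + (1 - p⁻¹) * (M*(P*ρ*P)).trace := by
    rw [hdec, mul_add, mul_add, mul_add, trace_add, trace_add, trace_add, mul_smul_comm,
      trace_smul, smul_eq_mul]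
  -- bound 1 : the Q ρ Q term
  have ht1 : (M*(Q*ρ*Q)).trace.re ≤ 1 - pr := by
    have h0 : 0 ≤ ((1 - M) * (Q*ρ*Q)).trace := psd_mul_trace_nonneg h1subM hPsd_QρQ
    rw [sub_mul, one_mul, trace_sub, hqtr] at h0
    have h1 := (Complex.le_def.mp h0).1
    simp only [Complex.zero_re, Complex.sub_re, Complex.one_re] at h1
    rw [hprdef]
    linarith
  -- bound 4 : the P ρ P term
  have h0a : 0 ≤ p - (M*(P*ρ*P)).trace := by
    have h0 : 0 ≤ ((1 - M) * (P*ρ*P)).trace := psd_mul_trace_nonneg h1subM hPsd_PρP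
    rwa [sub_mul, one_mul, trace_sub, ← hp_eq] at h0
  have h0b : 0 ≤ p + (M*(P*ρ*P)).trace := by
    have h0 : 0 ≤ ((1 + M) * (P*ρ*P)).trace := psd_mul_trace_nonneg h1addM hPsd_PρP
    rwa [add_mul, one_mul, trace_add, ← hp_eq] at h0
  have ht4re : |(M*(P*ρ*P)).trace.re| ≤ pr := by
    have ha := (Complex.le_def.mp h0a).1
    have hb := (Complex.le_def.mp h0b).1
    simp only [Complex.zero_re, Complex.sub_re, Complex.add_re] at ha hb
    rw [abs_le]
    constructor <;> [linarith; linarith]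
  have ht4im : (M*(P*ρ*P)).trace.im = 0 := by
    have ha := (Complex.le_def.mp h0a).2
    simp only [Complex.zero_im, Complex.sub_im] at ha
    have : p.im - (M*(P*ρ*P)).trace.im = 0 := ha.symm
    linarith [hpim]
  have ht4 : ((1 - p⁻¹) * (M*(P*ρ*P)).trace).re ≤ 1 - pr := by
    have hc : (1 - p⁻¹) = (((1 - pr⁻¹ : ℝ)) : ℂ) := by
      rw [hpc, ← Complex.ofReal_inv, ← Complex.ofReal_one, ← Complex.ofReal_sub]
    rw [hc, Complex.re_ofReal_mul]
    rcases eq_or_lt_of_le hpr0 with h0 | h0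
    · have hz : (M*(P*ρ*P)).trace.re = 0 := by
        have h' := ht4re
        rw [← h0] at h'
        exact abs_nonpos_iff.mp h'
      rw [hz, mul_zero]
      linarith
    · have hne : pr ≠ 0 := ne_of_gt h0
      have hab : |1 - pr⁻¹| = (1 - pr) / pr := by
        have hinv : 1 ≤ pr⁻¹ := (one_le_inv₀ h0).mpr hpr1
        rw [abs_of_nonpos (by linarith)]
        field_simp
        ring
      calc (1 - pr⁻¹) * (M*(P*ρ*P)).trace.re
          ≤ |(1 - pr⁻¹) * (M*(P*ρ*P)).trace.re| := le_abs_self _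
        _ = |1 - pr⁻¹| * |(M*(P*ρ*P)).trace.re| := abs_mul _ _
        _ ≤ |1 - pr⁻¹| * pr := by
            exact mul_le_mul_of_nonneg_left ht4re (abs_nonneg _)
        _ = 1 - pr := by rw [hab]; field_simp
  -- Cauchy–Schwarz bounds for the cross terms
  set R : Matrix m m ℂ := psdSqrt hρ.1 with hRdef
  have hRh : Rᴴ = R := (psdSqrt_psd hρ.1).1
  have hRR : R * R = ρ := psdSqrt_mul_self hρ.1 hρ.eigenvalues_nonneg
  have hcs : Real.sqrt ((1:ℝ) - pr) * Real.sqrt pr = Real.sqrt (1-pr) * Real.sqrt pr := rfl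
  have hQRRQ : ((R*Q)ᴴ * (R*Q)).trace.re = 1 - pr := by
    rw [conjTranspose_mul, hRh, hQ_herm]
    have he : Q * R * (R * Q) = Q*ρ*Q := by
      simp only [← mul_assoc]
      rw [mul_assoc Q R R, hRR]
    rw [he, hqtr]
    simp [Complex.sub_re, hprdef]
  have hPRRP : ((R*P)ᴴ * (R*P)).trace.re = pr := by
    rw [conjTranspose_mul, hRh, hP_herm]
    have he : P * R * (R * P) = P*ρ*P := by
      simp only [← mul_assoc]
      rw [mul_assoc P R R, hRR]
    rw [he, ← hp_eq]
  have ht2 : (M*(Q*ρ*P)).trace.re ≤ Real.sqrt (1-pr) * Real.sqrt pr := by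
    have key := abs_trace_conjTranspose_mul_le (R * Q) (R * (P * M))
    have e1 : ((R*Q)ᴴ * (R*(P*M))).trace = (M*(Q*ρ*P)).trace := by
      rw [conjTranspose_mul, hRh, hQ_herm]
      have he : Q * R * (R * (P * M)) = (Q*ρ*P) * M := by
        simp only [← mul_assoc]
        rw [mul_assoc Q R R, hRR]
      rw [he, trace_mul_comm]
    have e3 : ((R*(P*M))ᴴ * (R*(P*M))).trace.re = pr := by
      rw [conjTranspose_mul, hRh, conjTranspose_mul, hM_herm, hP_herm]
      have he : M * P * R * (R * (P * M)) = M * (P*ρ*P) * M := by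
        simp only [← mul_assoc]
        rw [mul_assoc (M*P) R R, hRR]
      rw [he, trace_mul_comm, ← mul_assoc, hMM, one_mul, ← hp_eq]
    rw [e1, hQRRQ, e3] at key
    exact le_trans (Complex.re_le_norm _) key
  have ht3 : (M*(P*ρ*Q)).trace.re ≤ Real.sqrt pr * Real.sqrt (1-pr) := by
    have key := abs_trace_conjTranspose_mul_le (R * P) (R * (Q * M))
    have e1 : ((R*P)ᴴ * (R*(Q*M))).trace = (M*(P*ρ*Q)).trace := by
      rw [conjTranspose_mul, hRh, hP_herm]
      have he : P * R * (R * (Q * M)) = (P*ρ*Q) * M := by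
        simp only [← mul_assoc]
        rw [mul_assoc P R R, hRR]
      rw [he, trace_mul_comm]
    have e3 : ((R*(Q*M))ᴴ * (R*(Q*M))).trace.re = 1 - pr := by
      rw [conjTranspose_mul, hRh, conjTranspose_mul, hM_herm, hQ_herm]
      have he : M * Q * R * (R * (Q * M)) = M * (Q*ρ*Q) * M := by
        simp only [← mul_assoc]
        rw [mul_assoc (M*Q) R R, hRR]
      rw [he, trace_mul_comm, ← mul_assoc, hMM, one_mul, hqtr]
      simp [Complex.sub_re, hprdef]
    rw [e1, hPRRP, e3] at key
    exact le_trans (Complex.re_le_norm _) key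
  -- assemble
  have hsum : (∑ i, |lam i|) ≤ 2*(1-pr) + 2*(Real.sqrt (1-pr) * Real.sqrt pr) := by
    have hres : (∑ i, |lam i|) = (M*(Q*ρ*Q)).trace.re + (M*(Q*ρ*P)).trace.re
        + (M*(P*ρ*Q)).trace.re + ((1 - p⁻¹) * (M*(P*ρ*P)).trace).re := by
      have := congrArg Complex.re hsplit
      rw [htrMΔ, Complex.ofReal_re] at this
      simpa [Complex.add_re] using this
    rw [hres]
    have := mul_comm (Real.sqrt pr) (Real.sqrt (1-pr))
    linarith [ht1, ht2, ht3, ht4, this ▸ ht3]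
  -- final arithmetic
  rw [hTD]
  have h1 : Real.sqrt (1-pr) ≤ Real.sqrt δ := Real.sqrt_le_sqrt hδp
  have h2 : Real.sqrt pr ≤ 1 := by
    rw [show (1:ℝ) = Real.sqrt 1 from (Real.sqrt_one).symm]
    exact Real.sqrt_le_sqrt hpr1
  have h3 : δ ≤ Real.sqrt δ := by
    nlinarith [Real.sq_sqrt hδ0, Real.sqrt_le_one.mpr hδ1, Real.sqrt_nonneg δ]
  have h4 : Real.sqrt (1-pr) * Real.sqrt pr ≤ Real.sqrt δ := by
    calc Real.sqrt (1-pr) * Real.sqrt pr ≤ Real.sqrt δ * 1 :=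
      mul_le_mul h1 h2 (Real.sqrt_nonneg _) (Real.sqrt_nonneg _)
    _ = Real.sqrt δ := mul_one _
  linarith
end
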